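/- Let G be reductive acting linearly on V over a field of characteristic 0, χ, ε characters with ε ∈ C(χ), codim_V V^{us}(G,χ) ≥ 2, and suppose the sheaf L_{Y_ε,ε} := (q_ε* O_{V^{ss}(G,ε)})^G_ε on Y_ε is invertible. Then for the morphism ψ: Y_χ → Y_ε: (i) ψ_* L_{Y_χ,ε} = L_{Y_ε,ε}, and (ii) the natural map ψ* L_{Y_ε,ε} → L_{Y_χ,ε} is an isomorphism. -/

import Mathlib

/-!
STATEMENT 19: Let `G` act linearly on `V` over a field of characteristic 0, `χ, ε`
characters with `ε ∈ C(χ)` and `codim_V V^{us}(G,χ) ≥ 2`, and suppose that the sheaf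
`L_{Y_ε,ε} = (q_{ε*} O)^G_ε` on `Y_ε` is invertible.  Then for `ψ : Y_χ → Y_ε`:
(i) `ψ_* L_{Y_χ,ε} = L_{Y_ε,ε}`, and (ii) `ψ* L_{Y_ε,ε} → L_{Y_χ,ε}` is an
isomorphism.

Modeling: as in Statement 17.  Sections of `L_{Y_χ,δ}` over (the image of) an open
`W ⊆ V^{ss}(G,χ)` are the `δ`-semiinvariant rational functions regular on `W`
(`stdSect`).  (i) says: over each affine chart `D(f)` of `Y_ε`
(`f` an `ε^{mm}`-semiinvariant, `q_ε⁻¹ D(f) = D(f)`), the `ε`-semiinvariant functions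
regular on `ψ⁻¹`-side `D(f) ∩ V^{ss}(G,χ)` coincide with those regular on all of
`D(f)` (Hartogs extension across the codimension-≥2 unstable locus).  (ii) says: a
trivializing section `s` of `L_{Y_ε,ε}` over `D(f)` also trivializes `L_{Y_χ,ε}` over
`ψ⁻¹ D(f)`.
-/

open MvPolynomial

section

variable {K : Type} [Field K] {G : Type} [Group G] {m : ℕ}

def IsSemistablePt (ρ : G →* ((Fin m → K) ≃ₗ[K] (Fin m → K))) (χ : G →* Kˣ)
    (x : Fin m → K) : Prop :=
  ∃ n : ℕ, 1 ≤ n ∧ ∃ f : MvPolynomial (Fin m) K,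
    (∀ (g : G) (y : Fin m → K), eval (ρ g y) f = ((χ g : K)) ^ n * eval y f) ∧
    eval x f ≠ 0

def Semiinv (ρ : G →* ((Fin m → K) ≃ₗ[K] (Fin m → K))) (α : G →* Kˣ)
    (f : MvPolynomial (Fin m) K) : Prop :=
  ∀ (g : G) (y : Fin m → K), eval (ρ g y) f = (α g : K) * eval y f

def SemiinvFrac (ρ : G →* ((Fin m → K) ≃ₗ[K] (Fin m → K))) (α : G →* Kˣ)
    (u : FractionRing (MvPolynomial (Fin m) K)) : Prop :=
  ∃ (a b : MvPolynomial (Fin m) K) (β : G →* Kˣ), b ≠ 0 ∧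
    Semiinv ρ (α * β) a ∧ Semiinv ρ β b ∧
    u * algebraMap (MvPolynomial (Fin m) K) (FractionRing (MvPolynomial (Fin m) K)) b
      = algebraMap (MvPolynomial (Fin m) K) (FractionRing (MvPolynomial (Fin m) K)) a

def RegOn (W : Set (Fin m → K)) (u : FractionRing (MvPolynomial (Fin m) K)) : Prop :=
  ∀ x ∈ W, ∃ a b : MvPolynomial (Fin m) K, eval x b ≠ 0 ∧
    u * algebraMap (MvPolynomial (Fin m) K) (FractionRing (MvPolynomial (Fin m) K)) b
      = algebraMap (MvPolynomial (Fin m) K) (FractionRing (MvPolynomial (Fin m) K)) a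

def stdSect (ρ : G →* ((Fin m → K) ≃ₗ[K] (Fin m → K))) (δ : G →* Kˣ)
    (W : Set (Fin m → K)) : Set (FractionRing (MvPolynomial (Fin m) K)) :=
  {u | SemiinvFrac ρ δ u ∧ RegOn W u}

def Dset (h : MvPolynomial (Fin m) K) : Set (Fin m → K) := {x | eval x h ≠ 0}

end

-- auxiliary lemmas

section Aux

variable {K : Type} [Field K] {m : ℕ}

lemma exists_prime_factor_eval_zero (B : MvPolynomial (Fin m) K) (x : Fin m → K) :
    B ≠ 0 → eval x B = 0 → ∃ p : MvPolynomial (Fin m) K, Prime p ∧ p ∣ B ∧ eval x p = 0 := by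
  induction B using UniqueFactorizationMonoid.induction_on_prime with
  | h₁ => intro h; exact absurd rfl h
  | h₂ q hq =>
      intro _ hev
      exact absurd hev (by simpa using (hq.map (eval x)).ne_zero)
  | h₃ a q ha hq ih =>
      intro _ hev
      rw [map_mul] at hev
      rcases mul_eq_zero.mp hev with h | h
      · exact ⟨q, hq, dvd_mul_right _ _, h⟩
      · obtain ⟨p, hp, hpd, hpe⟩ := ih ha h
        exact ⟨p, hp, hpd.mul_left q, hpe⟩

lemma eq_C_of_totalDegree_eq_zero {p : MvPolynomial (Fin m) K}
    (h : p.totalDegree = 0) : p = MvPolynomial.C (MvPolynomial.coeff 0 p) := by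
  rw [MvPolynomial.totalDegree_eq_zero_iff] at h
  ext d
  rcases eq_or_ne d 0 with rfl | hd
  · simp
  · rw [MvPolynomial.coeff_C, if_neg (Ne.symm hd)]
    by_contra hc
    have hmem : d ∈ p.support := MvPolynomial.mem_support_iff.mpr hc
    exact hd (Finsupp.ext fun i => h d hmem i)

end Aux

section Hartogs

variable {K : Type} [Field K] [IsAlgClosed K] {G : Type} [Group G] {m : ℕ}

/-- Hartogs extension: a rational function regular on `D(f) ∩ V^{ss}(G,χ)` is regular
on all of `D(f)`, when the unstable locus contains no hypersurface. -/
lemma regOn_extend (ρ : G →* ((Fin m → K) ≃ₗ[K] (Fin m → K))) (χ : G →* Kˣ)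
    (hcodim : ∀ f : MvPolynomial (Fin m) K, 0 < f.totalDegree →
      ¬ ({x | eval x f = 0} ⊆ {x | ¬ IsSemistablePt ρ χ x}))
    (f : MvPolynomial (Fin m) K) (u : FractionRing (MvPolynomial (Fin m) K))
    (hreg : RegOn (Dset f ∩ {y | IsSemistablePt ρ χ y}) u) :
    RegOn (Dset f) u := by
  classical
  have hinj : Function.Injective
      (algebraMap (MvPolynomial (Fin m) K) (FractionRing (MvPolynomial (Fin m) K))) :=
    IsFractionRing.injective _ _
  obtain ⟨A, B, hcop, hmk⟩ :=
    IsFractionRing.exists_reduced_fraction (MvPolynomial (Fin m) K)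
      (K := FractionRing (MvPolynomial (Fin m) K)) u
  have hBne : (B : MvPolynomial (Fin m) K) ≠ 0 := nonZeroDivisors.coe_ne_zero _
  have hu : u * algebraMap (MvPolynomial (Fin m) K) (FractionRing (MvPolynomial (Fin m) K)) B
      = algebraMap (MvPolynomial (Fin m) K) (FractionRing (MvPolynomial (Fin m) K)) A := by
    rw [← hmk]
    exact IsLocalization.mk'_spec _ _ _
  intro x hx
  -- It suffices to show `eval x B ≠ 0`.
  refine ⟨A, B, ?_, hu⟩
  intro hBx
  -- take a prime factor `p` of `B` vanishing at `x`
  obtain ⟨p, hp, hpB, hpx⟩ := exists_prime_factor_eval_zero B x hBne hBx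
  have hpA : ¬ p ∣ A := fun h => hp.not_unit (hcop h hpB)
  -- `p` does not vanish at any semistable point of `D(f)`
  have hpdvd : ∀ z ∈ Dset f ∩ {y | IsSemistablePt ρ χ y}, eval z p ≠ 0 := by
    intro z hz hpz
    obtain ⟨a, b, hbz, hab⟩ := hreg z hz
    have hABab : A * b = a * (B : MvPolynomial (Fin m) K) := by
      apply hinj
      rw [map_mul, map_mul, ← hu, ← hab]; ring
    have hpb : p ∣ b := by
      rcases hp.dvd_or_dvd (show p ∣ A * b from hABab ▸ (hpB.mul_left a)) with h | h
      · exact absurd h hpA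
      · exact h
    obtain ⟨c, hc⟩ := hpb
    rw [hc, map_mul, hpz, zero_mul] at hbz
    exact hbz rfl
  -- hence `Z(p) ∩ D(f)` is contained in the unstable locus
  have hZpDf : ∀ w : Fin m → K, eval w p = 0 → eval w f ≠ 0 → ¬ IsSemistablePt ρ χ w := by
    intro w hw hfw hss
    exact hpdvd w ⟨hfw, hss⟩ hw
  -- `p ∤ f` since `x ∈ D(f)` and `eval x p = 0`
  have hpf : ¬ p ∣ f := by
    intro hdvd
    obtain ⟨c, hc⟩ := hdvd
    apply hx
    rw [hc, map_mul, hpx, zero_mul]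
  -- `Z(p)` is contained in the unstable locus
  have hZp : {w : Fin m → K | eval w p = 0} ⊆ {w | ¬ IsSemistablePt ρ χ w} := by
    intro y hy hss
    obtain ⟨n, hn, g, hg, hgy⟩ := hss
    -- `f * g` vanishes on `Z(p)`
    have hvan : f * g ∈ MvPolynomial.vanishingIdeal K {w : Fin m → K | eval w p = 0} := by
      rw [MvPolynomial.mem_vanishingIdeal_iff]
      intro w hw
      rw [map_mul, MvPolynomial.aeval_eq_eval]
      rcases eq_or_ne (eval w f) 0 with h | h
      · rw [h, zero_mul]
      · have hwus : ¬ IsSemistablePt ρ χ w := hZpDf w hw h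
        have hgw : eval w g = 0 := by
          by_contra hgw
          exact hwus ⟨n, hn, g, hg, hgw⟩
        rw [hgw, mul_zero]
    -- Nullstellensatz: `f * g ∈ radical (span {p})`, so `p ∣ f * g`
    have hzl : {w : Fin m → K | eval w p = 0} = MvPolynomial.zeroLocus K (Ideal.span {p}) := by
      ext w
      simp only [MvPolynomial.mem_zeroLocus_iff, Set.mem_setOf_eq]
      constructor
      · intro h q hq
        obtain ⟨c, hc⟩ := Ideal.mem_span_singleton'.mp hq
        rw [← hc, map_mul, MvPolynomial.aeval_eq_eval, h, mul_zero]
      · intro h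
        exact h p (Ideal.subset_span rfl)
    rw [hzl, MvPolynomial.vanishingIdeal_zeroLocus_eq_radical] at hvan
    obtain ⟨k, hk⟩ := hvan
    have hpfg : p ∣ f * g := hp.dvd_of_dvd_pow (Ideal.mem_span_singleton.mp hk)
    rcases hp.dvd_or_dvd hpfg with h | h
    · exact hpf h
    · obtain ⟨c, hc⟩ := h
      rw [hc, map_mul, hy, zero_mul] at hgy
      exact hgy rfl
  -- but then `p` would be a hypersurface in the unstable locus
  have hdeg : 0 < p.totalDegree := by
    rcases Nat.eq_zero_or_pos p.totalDegree with h | h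
    · exfalso
      have hC := eq_C_of_totalDegree_eq_zero h
      rw [hC, MvPolynomial.eval_C] at hpx
      rw [hC, hpx, map_zero] at hp
      exact hp.ne_zero rfl
    · exact h
  exact hcodim p hdeg hZp

end Hartogs


theorem pushforward_and_pullback_of_linearized_sheaf
    {K G : Type} [Field K] [IsAlgClosed K] [CharZero K] [Group G] {m : ℕ}
    (ρ : G →* ((Fin m → K) ≃ₗ[K] (Fin m → K))) (hker : Finite ρ.ker)
    (χ ε : G →* Kˣ)
    -- `ε ∈ C(χ)`:
    (hcone : {x : Fin m → K | IsSemistablePt ρ χ x} ⊆ {x | IsSemistablePt ρ ε x})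
    -- `codim_V V^{us}(G,χ) ≥ 2`: the unstable locus contains no hypersurface:
    (hcodim : ∀ f : MvPolynomial (Fin m) K, 0 < f.totalDegree →
      ¬ ({x | eval x f = 0} ⊆ {x | ¬ IsSemistablePt ρ χ x})) :
    -- (i) `ψ_* L_{Y_χ,ε} = L_{Y_ε,ε}`: over every chart `D(f)` of `Y_ε`,
    (∀ (f : MvPolynomial (Fin m) K) (mm : ℕ), 1 ≤ mm → Semiinv ρ (ε ^ mm) f →
      stdSect ρ ε (Dset f ∩ {y | IsSemistablePt ρ χ y}) = stdSect ρ ε (Dset f)) ∧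
    -- (ii) if `L_{Y_ε,ε}` is invertible, the canonical map
    -- `ψ* L_{Y_ε,ε} = ψ*ψ_* L_{Y_χ,ε} → L_{Y_χ,ε}` is an isomorphism: any local
    -- trivialization `s` of `L_{Y_ε,ε}` over `D(f)` trivializes `L_{Y_χ,ε}` over
    -- `ψ⁻¹ D(f)`:
    (∀ (f : MvPolynomial (Fin m) K) (mm : ℕ)
        (s : FractionRing (MvPolynomial (Fin m) K)),
      1 ≤ mm → Semiinv ρ (ε ^ mm) f →
      s ∈ stdSect ρ ε (Dset f) →
      (∀ u ∈ stdSect ρ ε (Dset f), ∃ v ∈ stdSect ρ 1 (Dset f), u = s * v) →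
      ∀ u ∈ stdSect ρ ε (Dset f ∩ {y | IsSemistablePt ρ χ y}),
        ∃ v ∈ stdSect ρ 1 (Dset f ∩ {y | IsSemistablePt ρ χ y}), u = s * v) := by
  constructor
  · -- (i)
    intro f mm hmm hf
    apply Set.Subset.antisymm
    · rintro u ⟨hsemi, hreg⟩
      exact ⟨hsemi, regOn_extend ρ χ hcodim f u hreg⟩
    · rintro u ⟨hsemi, hreg⟩
      exact ⟨hsemi, fun x hx => hreg x hx.1⟩
  · -- (ii)
    intro f mm s hmm hf hs htriv u hu
    have hi : stdSect ρ ε (Dset f ∩ {y | IsSemistablePt ρ χ y}) = stdSect ρ ε (Dset f) := by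
      apply Set.Subset.antisymm
      · rintro w ⟨hsemi, hreg⟩
        exact ⟨hsemi, regOn_extend ρ χ hcodim f w hreg⟩
      · rintro w ⟨hsemi, hreg⟩
        exact ⟨hsemi, fun x hx => hreg x hx.1⟩
    rw [hi] at hu
    obtain ⟨v, ⟨hvsemi, hvreg⟩, hv⟩ := htriv u hu
    exact ⟨v, ⟨hvsemi, fun x hx => hvreg x hx.1⟩, hv⟩
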